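/- Let w : ℝ → ℝ be a function taking nonnegative values, whose support is a finite subset of the half-open interval (0,1]. Suppose that for every x ∈ [1/2, 1] one has ∑_{y : x ≤ y ≤ 1} w(y)·y ≥ ∑_{y : 0 < y ≤ 1-x} w(y)·y (each sum ranging over the finitely many support points y of w in the indicated range). Then ∑_{y : 0 < y ≤ 1} w(y)·y·(1 − 2y) ≤ 0. -/

import Mathlib

open MeasureTheory

lemma aux_integ (c a : ℝ) :
    ∫ x in Set.Ioc (1/2:ℝ) 1, (Set.Iic a).indicator (fun _ => c) x
      = c * max (min a 1 - 1/2) 0 := by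
  rw [MeasureTheory.integral_indicator measurableSet_Iic,
    MeasureTheory.setIntegral_const, measureReal_restrict_apply measurableSet_Iic,
    Set.inter_comm, Set.Ioc_inter_Iic, Real.volume_real_Ioc,
    smul_eq_mul, mul_comm, min_comm]

open Classical in
/-- Lemma 3.6 of the paper ("middle region" lemma): if `w : ℝ → ℝ` is nonnegative
with finite support contained in `(0,1]`, and for every `x ∈ [1/2,1]` the weighted
mass on `[x,1]` dominates the weighted mass on `(0,1-x]`, then
`∑ w(y)·y·(1-2y) ≤ 0`. -/
theorem stmt_0 (w : ℝ → ℝ) (hw : ∀ x, 0 ≤ w x)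
    (hfin : (Function.support w).Finite)
    (hsupp : Function.support w ⊆ Set.Ioc 0 1)
    (hcond : ∀ x ∈ Set.Icc (1/2 : ℝ) 1,
      ∑ y ∈ hfin.toFinset.filter (fun y => x ≤ y ∧ y ≤ 1), w y * y ≥
      ∑ y ∈ hfin.toFinset.filter (fun y => 0 < y ∧ y ≤ 1 - x), w y * y) :
    ∑ y ∈ hfin.toFinset.filter (fun y => 0 < y ∧ y ≤ 1), w y * y * (1 - 2 * y) ≤ 0 := by
  classical
  set s := hfin.toFinset with hs
  have hmem : ∀ y ∈ s, 0 < y ∧ y ≤ 1 := fun y hy => hsupp (hfin.mem_toFinset.mp hy)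
  have hgoal_eq : s.filter (fun y => 0 < y ∧ y ≤ 1) = s :=
    Finset.filter_true_of_mem hmem
  rw [hgoal_eq]
  -- integrability of each summand
  have hint : ∀ y ∈ s, MeasureTheory.Integrable
      (fun x => (Set.Iic y).indicator (fun _ => w y * y) x
        - (Set.Iic (1-y)).indicator (fun _ => w y * y) x)
      (volume.restrict (Set.Ioc (1/2:ℝ) 1)) := by
    intro y _
    have h1 : MeasureTheory.IntegrableOn (fun _ : ℝ => w y * y)
        (Set.Ioc (1/2:ℝ) 1) volume :=
      MeasureTheory.integrableOn_const measure_Ioc_lt_top.ne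
    exact (h1.indicator measurableSet_Iic).sub (h1.indicator measurableSet_Iic)
  -- nonnegativity of the integral
  have key : 0 ≤ ∫ x in Set.Ioc (1/2:ℝ) 1,
      (∑ y ∈ s, ((Set.Iic y).indicator (fun _ => w y * y) x
        - (Set.Iic (1-y)).indicator (fun _ => w y * y) x)) := by
    apply MeasureTheory.setIntegral_nonneg measurableSet_Ioc
    intro x hx
    have hx' : x ∈ Set.Icc (1/2:ℝ) 1 := ⟨le_of_lt hx.1, hx.2⟩
    have h := hcond x hx'
    have e1 : ∑ y ∈ s, (Set.Iic y).indicator (fun _ => w y * y) x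
        = ∑ y ∈ s.filter (fun y => x ≤ y ∧ y ≤ 1), w y * y := by
      rw [Finset.sum_filter]
      apply Finset.sum_congr rfl
      intro y hy
      have h2 := (hmem y hy).2
      by_cases hxy : x ≤ y
      · simp [Set.indicator_apply, Set.mem_Iic, hxy, h2]
      · simp [Set.indicator_apply, Set.mem_Iic, hxy]
    have e2 : ∑ y ∈ s, (Set.Iic (1-y)).indicator (fun _ => w y * y) x
        = ∑ y ∈ s.filter (fun y => 0 < y ∧ y ≤ 1 - x), w y * y := by
      rw [Finset.sum_filter]
      apply Finset.sum_congr rfl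
      intro y hy
      have h1 := (hmem y hy).1
      by_cases hxy : x ≤ 1 - y
      · simp [Set.indicator_apply, Set.mem_Iic, hxy, h1,
          show y ≤ 1 - x by linarith]
      · simp [Set.indicator_apply, Set.mem_Iic, hxy,
          show ¬ (y ≤ 1 - x) from fun hc => hxy (by linarith)]
    rw [Finset.sum_sub_distrib, e1, e2]
    linarith [h]
  rw [MeasureTheory.integral_finset_sum s hint] at key
  have key2 : 0 ≤ ∑ y ∈ s, w y * y * (y - 1/2) := by
    refine le_trans key (le_of_eq (Finset.sum_congr rfl ?_))
    intro y hy
    obtain ⟨h0, h1⟩ := hmem y hy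
    have hI1 : MeasureTheory.IntegrableOn
        ((Set.Iic y).indicator (fun _ : ℝ => w y * y)) (Set.Ioc (1/2:ℝ) 1) volume :=
      (MeasureTheory.integrableOn_const measure_Ioc_lt_top.ne).indicator
        measurableSet_Iic
    have hI2 : MeasureTheory.IntegrableOn
        ((Set.Iic (1-y)).indicator (fun _ : ℝ => w y * y)) (Set.Ioc (1/2:ℝ) 1) volume :=
      (MeasureTheory.integrableOn_const measure_Ioc_lt_top.ne).indicator
        measurableSet_Iic
    rw [MeasureTheory.integral_sub hI1 hI2, aux_integ, aux_integ,
      min_eq_left h1, min_eq_left (by linarith : (1:ℝ) - y ≤ 1)]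
    rcases le_total y (1/2) with hc | hc
    · rw [max_eq_right (by linarith), max_eq_left (by linarith)]
      ring
    · rw [max_eq_left (by linarith), max_eq_right (by linarith)]
      ring
  have e3 : ∑ y ∈ s, w y * y * (1 - 2 * y)
      = (-2) * ∑ y ∈ s, w y * y * (y - 1/2) := by
    rw [Finset.mul_sum]
    exact Finset.sum_congr rfl (fun y _ => by ring)
  rw [e3]
  linarith
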